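/- Let 𝒜 ⊆ M_n be a *-subalgebra with identity, U a subspace of hermitian matrices with id ∈ U, and p ∈ 𝒜 a projection. If q ∈ 𝒜 is a projection with K(q) ⊇ K(p₀(u)) for some u ∈ U, where K(r) = (id−r)𝒜⁺(id−r) ∩ U, and if K(q) = K(p₀(u)), then q ⪯ p₀(u); that is, any projection defining the same cone K as a ground projection is dominated by that ground projection in the Löwner order. -/

import Mathlib

open Matrix
open scoped ComplexOrder

/-- The smallest eigenvalue (ground energy) of a matrix. -/
noncomputable def minEig {n : ℕ} (a : Matrix (Fin n) (Fin n) ℂ) : ℝ :=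
  sInf {c : ℝ | ∃ v : Fin n → ℂ, v ≠ 0 ∧ a.mulVec v = (c : ℂ) • v}

/-- The ground space of a hermitian matrix: the eigenspace of its smallest eigenvalue. -/
noncomputable def groundSpaceSet {n : ℕ} (a : Matrix (Fin n) (Fin n) ℂ) :
    Set (Fin n → ℂ) :=
  {v | a.mulVec v = (minEig a : ℂ) • v}

/-- The cone `K(p) = p'𝒜⁺p' ∩ U`, `p' = 1 - p`. -/
def coneK {n : ℕ} (𝒜 : StarSubalgebra ℂ (Matrix (Fin n) (Fin n) ℂ))
    (U : Submodule ℝ (Matrix (Fin n) (Fin n) ℂ))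
    (p : Matrix (Fin n) (Fin n) ℂ) : Set (Matrix (Fin n) (Fin n) ℂ) :=
  {u | u ∈ U ∧ ∃ a : Matrix (Fin n) (Fin n) ℂ, a ∈ 𝒜 ∧ a.PosSemidef ∧
    u = (1 - p) * a * (1 - p)}

-- every "eigenvalue" (with complex eigenvector) of a hermitian matrix is one of
-- its `IsHermitian.eigenvalues`
lemma mem_eigSet {n : ℕ} {u : Matrix (Fin n) (Fin n) ℂ} (hu : u.IsHermitian)
    {c : ℝ} (hc : ∃ v : Fin n → ℂ, v ≠ 0 ∧ u.mulVec v = (c : ℂ) • v) :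
    ∃ i, c = hu.eigenvalues i := by
  obtain ⟨v, hv0, hv⟩ := hc
  by_contra h
  push_neg at h
  -- get an index with nonzero coefficient in the eigenbasis
  have hvE : (WithLp.toLp 2 v : EuclideanSpace ℂ (Fin n)) ≠ 0 := fun h => hv0 (by simpa using congrArg WithLp.ofLp h)
  have : hu.eigenvectorBasis.repr (WithLp.toLp 2 v : EuclideanSpace ℂ (Fin n)) ≠ 0 := by
    simpa using hvE
  obtain ⟨i, hi⟩ : ∃ i, hu.eigenvectorBasis.repr (WithLp.toLp 2 v : EuclideanSpace ℂ (Fin n)) i ≠ 0 := by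
    by_contra hall; push_neg at hall; exact this (by ext j; simpa using hall j)
  set w : Fin n → ℂ := ⇑(hu.eigenvectorBasis i) with hw
  have hdot : hu.eigenvectorBasis.repr (WithLp.toLp 2 v : EuclideanSpace ℂ (Fin n)) i
      = dotProduct (star w) v := by
    rw [OrthonormalBasis.repr_apply_apply]
    exact dotProduct_comm _ _
  have key : (hu.eigenvalues i : ℂ) * dotProduct (star w) v
      = (c : ℂ) * dotProduct (star w) v := by
    have h1 : star w ᵥ* u = star (u *ᵥ w) := by
      rw [star_mulVec, hu.eq]
    calc (hu.eigenvalues i : ℂ) * dotProduct (star w) v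
        = dotProduct (star ((hu.eigenvalues i : ℂ) • w)) v := by
          rw [star_smul, smul_dotProduct]
          simp [Complex.ext_iff]
      _ = dotProduct (star (u *ᵥ w)) v := by
          have := hu.mulVec_eigenvectorBasis i
          rw [show u *ᵥ w = (hu.eigenvalues i : ℂ) • w by
            simpa [← Complex.coe_smul] using this]
      _ = dotProduct (star w ᵥ* u) v := by rw [h1]
      _ = dotProduct (star w) (u *ᵥ v) := by
          rw [dotProduct_mulVec]
      _ = (c : ℂ) * dotProduct (star w) v := by
          rw [hv, dotProduct_smul, smul_eq_mul]
  have hne : dotProduct (star w) v ≠ 0 := by rwa [hdot] at hi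
  have : (hu.eigenvalues i : ℂ) = (c : ℂ) := mul_right_cancel₀ hne key
  exact h i (by exact_mod_cast this.symm)

lemma minEig_le {n : ℕ} {u : Matrix (Fin n) (Fin n) ℂ} (hu : u.IsHermitian)
    {c : ℝ} (hc : ∃ v : Fin n → ℂ, v ≠ 0 ∧ u.mulVec v = (c : ℂ) • v) :
    minEig u ≤ c := by
  have hbdd : BddBelow {c : ℝ | ∃ v : Fin n → ℂ, v ≠ 0 ∧ u.mulVec v = (c : ℂ) • v} := by
    refine (Set.Finite.subset (Set.finite_range hu.eigenvalues) ?_).bddBelow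
    rintro d hd
    obtain ⟨i, hi⟩ := mem_eigSet hu hd
    exact ⟨i, hi.symm⟩
  exact csInf_le hbdd hc

/-- easy direction of the variation principle.  Let `𝒜 ⊆ Mₙ(ℂ)` be a
*-subalgebra with identity, `U` a real subspace of hermitian matrices in `𝒜` with
`id ∈ U`, and `u ∈ U`.  If `p` is the ground projection of `u` and `q ∈ 𝒜` is a
projection with `K(q) ⊇ K(p₀(u))` and `K(q) = K(p₀(u))`, then `q ⪯ p₀(u)` in the
Löwner order. -/
theorem stmt10 {n : ℕ} (𝒜 : StarSubalgebra ℂ (Matrix (Fin n) (Fin n) ℂ))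
    (U : Submodule ℝ (Matrix (Fin n) (Fin n) ℂ))
    (hU : ∀ u ∈ U, u ∈ 𝒜 ∧ uᴴ = u)
    (h1 : (1 : Matrix (Fin n) (Fin n) ℂ) ∈ U)
    (u : Matrix (Fin n) (Fin n) ℂ) (hu : u ∈ U)
    (p : Matrix (Fin n) (Fin n) ℂ) (hp : p ∈ 𝒜) (hpH : pᴴ = p) (hpi : p * p = p)
    (hp0 : Set.range p.mulVec = groundSpaceSet u)
    (q : Matrix (Fin n) (Fin n) ℂ) (hq : q ∈ 𝒜) (hqH : qᴴ = q) (hqi : q * q = q)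
    (hsup : coneK 𝒜 U p ⊆ coneK 𝒜 U q)
    (heq : coneK 𝒜 U q = coneK 𝒜 U p) :
    (p - q).PosSemidef := by
  obtain ⟨huA, huH⟩ := hU u hu
  have huHerm : u.IsHermitian := huH
  set lam : ℝ := minEig u with hlam
  set b : Matrix (Fin n) (Fin n) ℂ := u - (lam : ℂ) • 1 with hb
  have hbH : b.IsHermitian := by
    unfold Matrix.IsHermitian
    simp [hb, huHerm.eq, Matrix.smul_one_eq_diagonal]
  -- b is positive semidefinite
  have hbPSD : b.PosSemidef := by
    apply hbH.posSemidef_iff_eigenvalues_nonneg.mpr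
    intro i
    have hev := hbH.mulVec_eigenvectorBasis i
    set w : Fin n → ℂ := ⇑(hbH.eigenvectorBasis i) with hw
    have hw0 : w ≠ 0 := by
      have := hbH.eigenvectorBasis.orthonormal.ne_zero i
      intro hcon; exact this (by ext j; exact congrFun hcon j)
    have huw : u *ᵥ w = ((hbH.eigenvalues i + lam : ℝ) : ℂ) • w := by
      have hbw : b *ᵥ w = ((hbH.eigenvalues i : ℝ) : ℂ) • w := by
        simpa [← Complex.coe_smul] using hev
      have : u *ᵥ w - (lam : ℂ) • w = ((hbH.eigenvalues i : ℝ) : ℂ) • w := by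
        simpa [hb, Matrix.sub_mulVec, Matrix.smul_mulVec, Matrix.one_mulVec] using hbw
      have := sub_eq_iff_eq_add.mp this
      rw [this, ← add_smul]
      push_cast
      ring_nf
    have := minEig_le huHerm ⟨w, hw0, huw⟩
    show (0:ℝ) ≤ _
    linarith
  -- b kills p
  have hbp : b * p = 0 := by
    have key : ∀ x, b *ᵥ (p *ᵥ x) = 0 := by
      intro x
      have : p *ᵥ x ∈ groundSpaceSet u := hp0 ▸ Set.mem_range_self x
      have hgs : u *ᵥ (p *ᵥ x) = (lam : ℂ) • (p *ᵥ x) := this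
      have hexp : b *ᵥ (p *ᵥ x) = u *ᵥ (p *ᵥ x) - (lam : ℂ) • (p *ᵥ x) := by
        rw [hb, Matrix.sub_mulVec, Matrix.smul_mulVec, Matrix.one_mulVec]
      rw [hexp, hgs, sub_self]
    ext i j
    have := congrFun (key (Pi.single j 1)) i
    simp only [Matrix.mulVec_single, mul_one] at this
    simpa [Matrix.mul_apply, Matrix.mulVec, dotProduct] using this
  have hpb : p * b = 0 := by
    have := congrArg Matrix.conjTranspose hbp
    rwa [Matrix.conjTranspose_mul, hbH.eq, hpH, Matrix.conjTranspose_zero] at this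
  -- b ∈ coneK p
  have hbU : b ∈ U := by
    have : b = u - lam • (1 : Matrix (Fin n) (Fin n) ℂ) := by
      ext i j
      simp [hb, Matrix.smul_apply, Complex.real_smul]
    rw [this]
    exact U.sub_mem hu (U.smul_mem lam h1)
  have hbKp : b ∈ coneK 𝒜 U p := by
    refine ⟨hbU, b, ?_, hbPSD, ?_⟩
    · have h1A : (1 : Matrix (Fin n) (Fin n) ℂ) ∈ 𝒜 := (hU 1 h1).1
      have : ((lam : ℂ) • (1 : Matrix (Fin n) (Fin n) ℂ)) ∈ 𝒜 := 𝒜.smul_mem h1A _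
      exact 𝒜.sub_mem huA this
    · rw [sub_mul, sub_mul, one_mul, mul_sub, hbp, hpb]
      simp
  -- hence b ∈ coneK q, so b * q = 0
  obtain ⟨-, a, -, -, hrep⟩ := hsup hbKp
  have hbq : b * q = 0 := by
    rw [hrep]
    have : ((1 : Matrix (Fin n) (Fin n) ℂ) - q) * q = 0 := by
      rw [sub_mul, one_mul, hqi, sub_self]
    rw [mul_assoc, this, mul_zero]
  -- range q ⊆ ground space = range p, so p * q = q
  have hpq : p * q = q := by
    have key : ∀ x, p *ᵥ (q *ᵥ x) = q *ᵥ x := by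
      intro x
      have h0 : b *ᵥ (q *ᵥ x) = 0 := by
        rw [Matrix.mulVec_mulVec, hbq, Matrix.zero_mulVec]
      have hgs : q *ᵥ x ∈ groundSpaceSet u := by
        have hexp : b *ᵥ (q *ᵥ x) = u *ᵥ (q *ᵥ x) - (lam : ℂ) • (q *ᵥ x) := by
          rw [hb, Matrix.sub_mulVec, Matrix.smul_mulVec, Matrix.one_mulVec]
        rw [hexp] at h0
        exact sub_eq_zero.mp h0
      rw [← hp0] at hgs
      obtain ⟨y, hy⟩ := hgs
      rw [← hy, Matrix.mulVec_mulVec, hpi]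
    ext i j
    have := congrFun (key (Pi.single j 1)) i
    simp only [Matrix.mulVec_single, mul_one] at this
    simpa [Matrix.mul_apply, Matrix.mulVec, dotProduct] using this
  have hqp : q * p = q := by
    have := congrArg Matrix.conjTranspose hpq
    rwa [Matrix.conjTranspose_mul, hpH, hqH] at this
  -- p - q is a hermitian idempotent, hence PSD
  have : p - q = (p - q)ᴴ * (p - q) := by
    rw [Matrix.conjTranspose_sub, hpH, hqH, sub_mul, mul_sub, mul_sub, hpi, hqi, hpq, hqp]
    abel
  rw [this]
  exact Matrix.posSemidef_conjTranspose_mul_self _
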